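/- Define H(t) = (1/√(πt)) ∫_{-π/2}^{π/2} e^{-sin²φ / t} cos(2φ) dφ for t > 0. Then t^{3/2} H(t) → √π / 4 as t → ∞. -/

import Mathlib

open Real Filter MeasureTheory intervalIntegral

private lemma lim1 (s : ℝ) :
    Tendsto (fun t : ℝ => t * (Real.exp (-s / t) - 1)) atTop (nhds (-s)) := by
  have hd : HasDerivAt (fun u : ℝ => Real.exp (-s * u)) (-s) 0 := by
    have h := (((hasDerivAt_id (0 : ℝ)).const_mul (-s)).exp)
    simpa using h
  have hs := hasDerivAt_iff_tendsto_slope.mp hd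
  have h2 : Tendsto (fun t : ℝ => 1 / t) atTop (nhdsWithin 0 {(0:ℝ)}ᶜ) := by
    apply tendsto_nhdsWithin_of_tendsto_nhds_of_eventually_within
    · simpa [one_div] using (tendsto_inv_atTop_zero : Tendsto (fun x : ℝ => x⁻¹) atTop (nhds 0))
    · filter_upwards [eventually_gt_atTop (0:ℝ)] with t ht
      exact (one_div_pos.mpr ht).ne'
  have h3 := hs.comp h2
  refine h3.congr' ?_
  filter_upwards [eventually_gt_atTop (0:ℝ)] with t ht
  have ht' : t ≠ 0 := ht.ne'
  simp only [Function.comp_apply, slope_def_field]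
  rw [mul_zero, Real.exp_zero, sub_zero, mul_one_div, one_div, div_inv_eq_mul]
  ring

private lemma cos_int : ∫ φ in (-(π/2))..(π/2), Real.cos (2*φ) = 0 := by
  have key : ∀ φ : ℝ, HasDerivAt (fun x : ℝ => Real.sin (2*x) / 2) (Real.cos (2*φ)) φ := by
    intro φ
    have h1 : HasDerivAt (fun x : ℝ => Real.sin (2*x)) (Real.cos (2*φ) * (2*1)) φ :=
      ((hasDerivAt_id φ).const_mul 2).sin
    have := h1.div_const 2
    convert this using 1
    · rfl
    · rfl
    ring
  rw [intervalIntegral.integral_eq_sub_of_hasDerivAt (fun φ _ => key φ)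
    ((by fun_prop : Continuous fun φ : ℝ => Real.cos (2*φ)).intervalIntegrable _ _)]
  have e1 : (2:ℝ) * (π/2) = π := by ring
  have e3 : (2:ℝ) * (-(π/2)) = -π := by ring
  rw [e1, e3, Real.sin_pi, Real.sin_neg, Real.sin_pi]
  ring

private lemma f_int : ∫ φ in (-(π/2))..(π/2), -(Real.sin φ)^2 * Real.cos (2*φ) = π/4 := by
  have key : ∀ φ : ℝ,
      HasDerivAt (fun x : ℝ => -(Real.sin (2*x) / 4) + x/4 + Real.sin (4*x) / 16)
        (-(Real.sin φ)^2 * Real.cos (2*φ)) φ := by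
    intro φ
    have h1 : HasDerivAt (fun x : ℝ => Real.sin (2*x)) (Real.cos (2*φ) * (2*1)) φ :=
      ((hasDerivAt_id φ).const_mul 2).sin
    have h4 : HasDerivAt (fun x : ℝ => Real.sin (4*x)) (Real.cos (4*φ) * (4*1)) φ :=
      ((hasDerivAt_id φ).const_mul 4).sin
    have hx : HasDerivAt (fun x : ℝ => x / 4) (1/4) φ := (hasDerivAt_id φ).div_const 4
    have h := ((h1.div_const 4).neg.add hx).add (h4.div_const 16)
    convert h using 1
    · rfl
    · rfl
    · rfl
    have hc4 : Real.cos (4*φ) = 2 * Real.cos (2*φ)^2 - 1 := by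
      rw [show (4:ℝ)*φ = 2*(2*φ) by ring, Real.cos_two_mul]
    have hc2 : Real.cos (2*φ) = 2 * Real.cos φ^2 - 1 := Real.cos_two_mul φ
    have hpyth : Real.sin φ^2 + Real.cos φ^2 = 1 := Real.sin_sq_add_cos_sq φ
    rw [hc4, hc2]
    linear_combination (1 - 2*Real.cos φ^2) * hpyth
  rw [intervalIntegral.integral_eq_sub_of_hasDerivAt (fun φ _ => key φ)
    ((by fun_prop : Continuous fun φ : ℝ => -(Real.sin φ)^2 * Real.cos (2*φ)).intervalIntegrable _ _)]
  have e1 : (2:ℝ) * (π/2) = π := by ring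
  have e2 : (4:ℝ) * (π/2) = 2*π := by ring
  have e3 : (2:ℝ) * (-(π/2)) = -π := by ring
  have e4 : (4:ℝ) * (-(π/2)) = -(2*π) := by ring
  rw [e1, e2, e3, e4, Real.sin_pi, Real.sin_neg, Real.sin_neg, Real.sin_pi, Real.sin_two_pi]
  ring

/-- For `H(t) = (1/√(πt)) ∫_{-π/2}^{π/2} e^{-sin²φ/t} cos(2φ) dφ`, we have
`t^{3/2} H(t) → √π/4` as `t → ∞`. -/
theorem stmt5 (H : ℝ → ℝ)
    (hH : ∀ t : ℝ, 0 < t →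
      H t = (1 / Real.sqrt (π * t)) *
        ∫ φ in (-(π/2))..(π/2), Real.exp (-(Real.sin φ)^2 / t) * Real.cos (2*φ)) :
    Tendsto (fun t : ℝ => t ^ (3/2 : ℝ) * H t) atTop (nhds (Real.sqrt π / 4)) := by
  have hπ := Real.pi_pos
  have hsπ : (0:ℝ) < Real.sqrt π := Real.sqrt_pos.mpr hπ
  have hab : -(π/2) ≤ π/2 := by linarith
  set J : ℝ → ℝ := fun t =>
    ∫ φ in Set.Ioc (-(π/2)) (π/2),
      t * (Real.exp (-(Real.sin φ)^2 / t) - 1) * Real.cos (2*φ) with hJdef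
  -- Step A : J t → π/4
  have hJ : Tendsto J atTop (nhds (π/4)) := by
    have hlim := MeasureTheory.tendsto_integral_filter_of_dominated_convergence
      (μ := volume.restrict (Set.Ioc (-(π/2)) (π/2))) (l := atTop)
      (F := fun (t : ℝ) (φ : ℝ) => t * (Real.exp (-(Real.sin φ)^2 / t) - 1) * Real.cos (2*φ))
      (f := fun φ => -(Real.sin φ)^2 * Real.cos (2*φ))
      (bound := fun _ => 1)
      (Eventually.of_forall fun t =>
        ((by fun_prop : Continuous fun φ : ℝ =>
          t * (Real.exp (-(Real.sin φ)^2 / t) - 1) * Real.cos (2*φ)).aestronglyMeasurable))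
      ?_ ?_ ?_
    · have hval : (∫ φ in Set.Ioc (-(π/2)) (π/2), -(Real.sin φ)^2 * Real.cos (2*φ)) = π/4 := by
        rw [← intervalIntegral.integral_of_le hab]; exact f_int
      rw [hval] at hlim
      exact hlim
    · -- bound
      filter_upwards [eventually_gt_atTop (0:ℝ)] with t ht
      refine ae_of_all _ fun φ => ?_
      set s := (Real.sin φ)^2 with hs
      have hs0 : 0 ≤ s := sq_nonneg _
      have hs1 : s ≤ 1 := Real.sin_sq_le_one φ
      have hneg : -s / t = -(s / t) := by ring
      have he1 : Real.exp (-s / t) ≤ 1 := by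
        rw [Real.exp_le_one_iff, hneg]
        exact neg_nonpos.mpr (div_nonneg hs0 ht.le)
      have he2 : 1 - Real.exp (-s / t) ≤ s / t := by
        have := Real.add_one_le_exp (-s / t)
        rw [hneg] at this ⊢
        linarith
      have habs : |t * (Real.exp (-s / t) - 1)| ≤ s := by
        rw [abs_mul, abs_of_pos ht, abs_of_nonpos (by linarith : Real.exp (-s/t) - 1 ≤ 0)]
        have : t * (1 - Real.exp (-s / t)) ≤ t * (s / t) := by
          exact mul_le_mul_of_nonneg_left he2 ht.le
        have ht' : t * (s / t) = s := by field_simp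
        calc t * -(Real.exp (-s/t) - 1) = t * (1 - Real.exp (-s/t)) := by ring
          _ ≤ t * (s / t) := this
          _ = s := ht'
      calc ‖t * (Real.exp (-s / t) - 1) * Real.cos (2*φ)‖
          = |t * (Real.exp (-s / t) - 1)| * |Real.cos (2*φ)| := abs_mul _ _
        _ ≤ s * 1 := by
            refine mul_le_mul habs (Real.abs_cos_le_one _) (abs_nonneg _) hs0
        _ ≤ 1 := by linarith
    · -- bound integrable
      refine MeasureTheory.integrableOn_const ?_
      exact measure_Ioc_lt_top.ne
    · -- pointwise limit
      refine ae_of_all _ fun φ => ?_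
      exact (lim1 ((Real.sin φ)^2)).mul_const _
  -- Step B : eventual equality
  have heq : (fun t : ℝ => (1 / Real.sqrt π) * J t)
      =ᶠ[atTop] (fun t : ℝ => t ^ (3/2 : ℝ) * H t) := by
    filter_upwards [eventually_gt_atTop (0:ℝ)] with t ht
    have hst : (0:ℝ) < Real.sqrt t := Real.sqrt_pos.mpr ht
    rw [hH t ht]
    have hcont1 : Continuous fun φ : ℝ => Real.exp (-(Real.sin φ)^2 / t) * Real.cos (2*φ) := by
      fun_prop
    have hcont2 : Continuous fun φ : ℝ => Real.cos (2*φ) := by fun_prop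
    have hint1 : IntegrableOn (fun φ : ℝ => t * (Real.exp (-(Real.sin φ)^2 / t) * Real.cos (2*φ)))
        (Set.Ioc (-(π/2)) (π/2)) := (continuous_const.mul hcont1).integrableOn_Ioc
    have hint2 : IntegrableOn (fun φ : ℝ => t * Real.cos (2*φ))
        (Set.Ioc (-(π/2)) (π/2)) := (continuous_const.mul hcont2).integrableOn_Ioc
    have hIoccos : (∫ φ in Set.Ioc (-(π/2)) (π/2), Real.cos (2*φ)) = 0 := by
      rw [← intervalIntegral.integral_of_le hab]; exact cos_int
    have hJt : J t = t * ∫ φ in Set.Ioc (-(π/2)) (π/2),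
        Real.exp (-(Real.sin φ)^2 / t) * Real.cos (2*φ) := by
      rw [hJdef]
      calc (∫ φ in Set.Ioc (-(π/2)) (π/2),
              t * (Real.exp (-(Real.sin φ)^2 / t) - 1) * Real.cos (2*φ))
          = ∫ φ in Set.Ioc (-(π/2)) (π/2),
              (t * (Real.exp (-(Real.sin φ)^2 / t) * Real.cos (2*φ)) - t * Real.cos (2*φ)) := by
            congr 1; ext φ; ring
        _ = (∫ φ in Set.Ioc (-(π/2)) (π/2), t * (Real.exp (-(Real.sin φ)^2 / t) * Real.cos (2*φ)))
            - ∫ φ in Set.Ioc (-(π/2)) (π/2), t * Real.cos (2*φ) :=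
            MeasureTheory.integral_sub hint1 hint2
        _ = t * (∫ φ in Set.Ioc (-(π/2)) (π/2), Real.exp (-(Real.sin φ)^2 / t) * Real.cos (2*φ))
            - t * ∫ φ in Set.Ioc (-(π/2)) (π/2), Real.cos (2*φ) := by
            rw [MeasureTheory.integral_const_mul, MeasureTheory.integral_const_mul]
        _ = _ := by rw [hIoccos]; ring
    rw [hJt, intervalIntegral.integral_of_le hab]
    have h1 : Real.sqrt (π * t) = Real.sqrt π * Real.sqrt t := Real.sqrt_mul hπ.le t
    have h2 : t ^ (3/2 : ℝ) = t * Real.sqrt t := by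
      rw [show (3/2:ℝ) = 1 + 1/2 by norm_num, Real.rpow_add ht, Real.rpow_one,
        ← Real.sqrt_eq_rpow]
    rw [h1, h2]
    field_simp
  have hfin := hJ.const_mul (1 / Real.sqrt π)
  have hval : (1 / Real.sqrt π) * (π/4) = Real.sqrt π / 4 := by
    have hh : Real.sqrt π * Real.sqrt π = π := Real.mul_self_sqrt hπ.le
    field_simp
    rw [Real.sq_sqrt hπ.le]
  rw [hval] at hfin
  exact hfin.congr' heq
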